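/- Let E : ℝ^d → ℝ be twice continuously differentiable, x* a critical point of E (∇E(x*) = 0), and δ > 0 such that on U(x*,δ) = {x : ‖x−x*‖₂ < δ}: (i) ‖∇²E(x) − ∇²E(y)‖₂ ≤ M‖x−y‖₂ for all x,y ∈ U(x*,δ); (ii) every eigenvalue λ of ∇²E(x) satisfies |λ| ∈ [μ, L] for 0 < μ < L. Let E_δ : ℝ^d → ℝ be twice continuously differentiable with, on U(x*,δ): ‖∇²E_δ(x) − ∇²E_δ(y)‖₂ ≤ ε‖x−y‖₂, ‖∇²E_δ(x)‖₂ ≤ ε, and ‖∇E_δ(x)‖₂ ≤ ε. If ε ≤ min{μ/2, μ²/(32M), μδ/12, M}, then there exists x*_NN with ∇(E + E_δ)(x*_NN) = 0 and ‖x*_NN − x*‖₂ ≤ 4ε/μ. -/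

import Mathlib

open Metric InnerProductSpace

/-- The canonical continuous linear map from the dual of a Euclidean space back to the space. -/
noncomputable def statement1.Lmap (d : ℕ) :
    (EuclideanSpace ℝ (Fin d) →L[ℝ] ℝ) →L[ℝ] EuclideanSpace ℝ (Fin d) :=
  ((toDual ℝ (EuclideanSpace ℝ (Fin d))).symm.toContinuousLinearEquiv :
    (EuclideanSpace ℝ (Fin d) →L[ℝ] ℝ) ≃L[ℝ] EuclideanSpace ℝ (Fin d)).toContinuousLinearMap

/-- Lower bound on a symmetric operator whose eigenvalues are at least `μ` in absolute value. -/
theorem statement1.lower_bound {d : ℕ}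
    (A : EuclideanSpace ℝ (Fin d) →L[ℝ] EuclideanSpace ℝ (Fin d))
    (hsymA : (A.toLinearMap : Module.End ℝ (EuclideanSpace ℝ (Fin d))).IsSymmetric)
    (μ : ℝ) (hμ : 0 < μ)
    (hmod : ∀ lam : ℝ, Module.End.HasEigenvalue (A.toLinearMap) lam → μ ≤ |lam|)
    (x : EuclideanSpace ℝ (Fin d)) : μ * ‖x‖ ≤ ‖A x‖ := by
  have hrank : Module.finrank ℝ (EuclideanSpace ℝ (Fin d)) = d := finrank_euclideanSpace_fin
  set b := hsymA.eigenvectorBasis hrank with hb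
  have heig : ∀ i, μ ≤ |hsymA.eigenvalues hrank i| := fun i =>
    hmod _ (hsymA.hasEigenvalue_eigenvalues hrank i)
  have h1 : ∀ v : EuclideanSpace ℝ (Fin d), ‖v‖ ^ 2 = ∑ i, (b.repr v i) ^ 2 := by
    intro v
    rw [← b.repr.norm_map v, EuclideanSpace.norm_eq, Real.sq_sqrt (by positivity)]
    simp [sq_abs]
  have h2 : ∀ i, b.repr (A x) i = hsymA.eigenvalues hrank i * b.repr x i := fun i =>
    hsymA.eigenvectorBasis_apply_self_apply hrank x i
  have hsq : (μ * ‖x‖) ^ 2 ≤ ‖A x‖ ^ 2 := by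
    rw [mul_pow, h1 x, h1 (A x), Finset.mul_sum]
    apply Finset.sum_le_sum
    intro i _
    rw [h2 i, mul_pow]
    have h3 := heig i
    have h4 : μ ^ 2 ≤ hsymA.eigenvalues hrank i ^ 2 := by
      rw [← sq_abs (hsymA.eigenvalues hrank i)]
      exact pow_le_pow_left₀ hμ.le h3 2
    exact mul_le_mul_of_nonneg_right h4 (sq_nonneg _)
  have h0 : 0 ≤ μ * ‖x‖ := by positivity
  calc μ * ‖x‖ = Real.sqrt ((μ * ‖x‖) ^ 2) := (Real.sqrt_sq h0).symm
    _ ≤ Real.sqrt (‖A x‖ ^ 2) := Real.sqrt_le_sqrt hsq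
    _ = ‖A x‖ := Real.sqrt_sq (norm_nonneg _)

set_option maxHeartbeats 1000000 in
theorem statement1 {d : ℕ} (E Eδ : EuclideanSpace ℝ (Fin d) → ℝ)
    (hE : ContDiff ℝ 2 E) (hEδ : ContDiff ℝ 2 Eδ)
    (xstar : EuclideanSpace ℝ (Fin d)) (hcrit : gradient E xstar = 0)
    (δ M μ L ε : ℝ) (hδ : 0 < δ) (hM : 0 < M) (hμ : 0 < μ) (hμL : μ < L)
    (hLip : ∀ x ∈ Metric.ball xstar δ, ∀ y ∈ Metric.ball xstar δ,
      ‖fderiv ℝ (gradient E) x - fderiv ℝ (gradient E) y‖ ≤ M * ‖x - y‖)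
    (hmod : ∀ x ∈ Metric.ball xstar δ, ∀ lam : ℝ,
      Module.End.HasEigenvalue
        ((fderiv ℝ (gradient E) x).toLinearMap) lam → μ ≤ |lam| ∧ |lam| ≤ L)
    (hδLip : ∀ x ∈ Metric.ball xstar δ, ∀ y ∈ Metric.ball xstar δ,
      ‖fderiv ℝ (gradient Eδ) x - fderiv ℝ (gradient Eδ) y‖ ≤ ε * ‖x - y‖)
    (hδHess : ∀ x ∈ Metric.ball xstar δ, ‖fderiv ℝ (gradient Eδ) x‖ ≤ ε)
    (hδGrad : ∀ x ∈ Metric.ball xstar δ, ‖gradient Eδ x‖ ≤ ε)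
    (hεsmall : ε ≤ min (min (μ / 2) (μ ^ 2 / (32 * M))) (min (μ * δ / 12) M)) :
    ∃ xnn : EuclideanSpace ℝ (Fin d),
      gradient (fun x => E x + Eδ x) xnn = 0 ∧ ‖xnn - xstar‖ ≤ 4 * ε / μ := by
  classical
  have hε0 : 0 ≤ ε := le_trans (norm_nonneg _) (hδGrad xstar (Metric.mem_ball_self hδ))
  have hε1 : ε ≤ μ / 2 := le_trans hεsmall (le_trans (min_le_left _ _) (min_le_left _ _))
  have hε2 : ε ≤ μ ^ 2 / (32 * M) :=
    le_trans hεsmall (le_trans (min_le_left _ _) (min_le_right _ _))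
  have hε3 : ε ≤ μ * δ / 12 :=
    le_trans hεsmall (le_trans (min_le_right _ _) (min_le_left _ _))
  -- trivial case: the space is a point
  rcases subsingleton_or_nontrivial (EuclideanSpace ℝ (Fin d)) with hsub | hnt
  · refine ⟨xstar, Subsingleton.elim _ _, ?_⟩
    simp only [sub_self, norm_zero]
    positivity
  -- main case
  have hEd : Differentiable ℝ E := hE.differentiable two_ne_zero
  have hEδd : Differentiable ℝ Eδ := hEδ.differentiable two_ne_zero
  have hE1 : ContDiff ℝ 1 (fderiv ℝ E) := hE.fderiv_right (by norm_num)
  have hEδ1 : ContDiff ℝ 1 (fderiv ℝ Eδ) := hEδ.fderiv_right (by norm_num)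
  have hgradL : ∀ f : EuclideanSpace ℝ (Fin d) → ℝ,
      gradient f = fun x => statement1.Lmap d (fderiv ℝ f x) := fun _ => rfl
  have hgE : ContDiff ℝ 1 (gradient E) := by
    rw [hgradL E]; exact (statement1.Lmap d).contDiff.comp hE1
  have hgEδ : ContDiff ℝ 1 (gradient Eδ) := by
    rw [hgradL Eδ]; exact (statement1.Lmap d).contDiff.comp hEδ1
  have hfg : fderiv ℝ (gradient E) xstar
      = (statement1.Lmap d).comp (fderiv ℝ (fderiv ℝ E) xstar) := by
    rw [hgradL E]
    exact ((statement1.Lmap d).hasFDerivAt.comp xstar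
      (hE1.differentiable one_ne_zero xstar).hasFDerivAt).fderiv
  set A := fderiv ℝ (gradient E) xstar with hA
  -- inner product identity for A
  have hAapp : ∀ u v : EuclideanSpace ℝ (Fin d),
      (inner ℝ (A u) v : ℝ) = (fderiv ℝ (fderiv ℝ E) xstar) u v := by
    intro u v
    rw [show A = (statement1.Lmap d).comp (fderiv ℝ (fderiv ℝ E) xstar) from hfg]
    exact InnerProductSpace.toDual_symm_apply
  have hsecond : ∀ u v : EuclideanSpace ℝ (Fin d),
      (fderiv ℝ (fderiv ℝ E) xstar) u v = (fderiv ℝ (fderiv ℝ E) xstar) v u :=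
    second_derivative_symmetric (fun y => (hEd y).hasFDerivAt)
      ((hE1.differentiable one_ne_zero xstar).hasFDerivAt)
  have hsymA : (A.toLinearMap : Module.End ℝ (EuclideanSpace ℝ (Fin d))).IsSymmetric := by
    intro u v
    have : (inner ℝ (A u) v : ℝ) = (inner ℝ (A v) u : ℝ) := by
      rw [hAapp, hAapp, hsecond]
    calc (inner ℝ (A.toLinearMap u) v : ℝ) = (inner ℝ (A u) v : ℝ) := rfl
      _ = (inner ℝ (A v) u : ℝ) := this
      _ = (inner ℝ u (A.toLinearMap v) : ℝ) := real_inner_comm _ _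
  -- lower bound for A
  have hlow : ∀ x, μ * ‖x‖ ≤ ‖A x‖ :=
    statement1.lower_bound A hsymA μ hμ
      (fun lam h => (hmod xstar (Metric.mem_ball_self hδ) lam h).1)
  -- A is a continuous linear equivalence
  have hinj : Function.Injective A := by
    intro u v huv
    have h := hlow (u - v)
    rw [map_sub, huv, sub_self, norm_zero] at h
    have h2 : ‖u - v‖ ≤ 0 := by nlinarith [norm_nonneg (u - v)]
    have h3 : ‖u - v‖ = 0 := le_antisymm h2 (norm_nonneg _)
    exact sub_eq_zero.mp (norm_eq_zero.mp h3)
  have hbij : Function.Bijective A.toLinearMap :=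
    ⟨hinj, (LinearMap.injective_iff_surjective.mp hinj)⟩
  let Aeq : EuclideanSpace ℝ (Fin d) ≃L[ℝ] EuclideanSpace ℝ (Fin d) :=
    (LinearEquiv.ofBijective A.toLinearMap hbij).toContinuousLinearEquiv
  have hAeq : (Aeq : EuclideanSpace ℝ (Fin d) →L[ℝ] EuclideanSpace ℝ (Fin d)) = A := by
    ext v; rfl
  -- bound on the inverse
  have hsymmb : ∀ y, ‖Aeq.symm y‖ ≤ μ⁻¹ * ‖y‖ := by
    intro y
    have h := hlow (Aeq.symm y)
    have hy : A (Aeq.symm y) = y := by rw [← hAeq]; exact Aeq.apply_symm_apply y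
    rw [hy] at h
    calc ‖Aeq.symm y‖ = μ⁻¹ * (μ * ‖Aeq.symm y‖) := by field_simp
      _ ≤ μ⁻¹ * ‖y‖ := mul_le_mul_of_nonneg_left h (inv_nonneg.mpr hμ.le)
  have hnorm : ‖(Aeq.symm : EuclideanSpace ℝ (Fin d) →L[ℝ] EuclideanSpace ℝ (Fin d))‖ ≤ μ⁻¹ :=
    ContinuousLinearMap.opNorm_le_bound _ (inv_nonneg.mpr hμ.le) hsymmb
  obtain ⟨x₀, hx₀⟩ := exists_ne (0 : EuclideanSpace ℝ (Fin d))
  have hsne : (Aeq.symm : EuclideanSpace ℝ (Fin d) →L[ℝ] EuclideanSpace ℝ (Fin d)) ≠ 0 := by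
    intro h
    apply hx₀
    have h1 : (Aeq.symm : EuclideanSpace ℝ (Fin d) →L[ℝ] EuclideanSpace ℝ (Fin d)) (Aeq x₀)
        = x₀ := Aeq.symm_apply_apply x₀
    rw [h] at h1
    simpa using h1.symm
  have hspos : 0 < ‖(Aeq.symm : EuclideanSpace ℝ (Fin d) →L[ℝ] EuclideanSpace ℝ (Fin d))‖ :=
    norm_pos_iff.mpr hsne
  have hμs : μ ≤ ‖(Aeq.symm : EuclideanSpace ℝ (Fin d) →L[ℝ] EuclideanSpace ℝ (Fin d))‖⁻¹ := by
    rw [inv_eq_one_div, le_div_iff₀ hspos]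
    calc μ * ‖(Aeq.symm : EuclideanSpace ℝ (Fin d) →L[ℝ] EuclideanSpace ℝ (Fin d))‖
        ≤ μ * μ⁻¹ := mul_le_mul_of_nonneg_left hnorm hμ.le
      _ = 1 := mul_inv_cancel₀ hμ.ne'
  -- the radius and the Lipschitz constant
  set r := 4 * ε / μ with hrdef
  have hr0 : 0 ≤ r := by positivity
  have hrδ : r < δ := by
    rw [hrdef, div_lt_iff₀ hμ]
    nlinarith [mul_pos hμ hδ]
  have hball : Metric.closedBall xstar r ⊆ Metric.ball xstar δ :=
    Metric.closedBall_subset_ball hrδ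
  have hMr : M * r ≤ μ / 8 := by
    have h1 : ε * (32 * M) ≤ μ ^ 2 := (le_div_iff₀ (by positivity)).mp hε2
    have hrr : M * r = M * (4 * ε) / μ := by rw [hrdef]; ring
    rw [hrr, div_le_div_iff₀ hμ (by norm_num : (0:ℝ) < 8)]
    nlinarith
  -- the surrogate gradient
  have hsum : ∀ z, gradient (fun x => E x + Eδ x) z = gradient E z + gradient Eδ z := by
    intro z
    have h : fderiv ℝ (fun x => E x + Eδ x) z = fderiv ℝ E z + fderiv ℝ Eδ z :=
      fderiv_add (hEd z) (hEδd z)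
    show (toDual ℝ (EuclideanSpace ℝ (Fin d))).symm (fderiv ℝ (fun x => E x + Eδ x) z) = _
    rw [h, map_add]
    rfl
  have hFeq : gradient (fun x => E x + Eδ x) = fun z => gradient E z + gradient Eδ z :=
    funext hsum
  have hFdiff : Differentiable ℝ (gradient fun x => E x + Eδ x) := by
    rw [hFeq]
    exact (hgE.differentiable one_ne_zero).add (hgEδ.differentiable one_ne_zero)
  have hdF : ∀ z, fderiv ℝ (gradient (fun x => E x + Eδ x)) z
      = fderiv ℝ (gradient E) z + fderiv ℝ (gradient Eδ) z := by
    intro z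
    rw [hFeq]
    exact fderiv_add (hgE.differentiable one_ne_zero z) (hgEδ.differentiable one_ne_zero z)
  -- approximation by A on the closed ball
  have happrox : ApproximatesLinearOn (gradient (fun x => E x + Eδ x))
      (Aeq : EuclideanSpace ℝ (Fin d) →L[ℝ] EuclideanSpace ℝ (Fin d))
      (Metric.closedBall xstar r) ((M * r + ε).toNNReal) := by
    intro x hx y hy
    rw [hAeq]
    set g : EuclideanSpace ℝ (Fin d) → EuclideanSpace ℝ (Fin d) :=
      fun w => gradient (fun x => E x + Eδ x) w - A w with hg
    have hgdiff : ∀ z, DifferentiableAt ℝ g z := fun z =>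
      (hFdiff z).sub A.differentiableAt
    have hgf : ∀ z ∈ Metric.closedBall xstar r, ‖fderiv ℝ g z‖ ≤ M * r + ε := by
      intro z hz
      have hzball : z ∈ Metric.ball xstar δ := hball hz
      have hdg : fderiv ℝ g z = fderiv ℝ (gradient (fun x => E x + Eδ x)) z - A := by
        rw [hg, fderiv_fun_sub (hFdiff z) A.differentiableAt, A.fderiv]
      rw [hdg, hdF z]
      have hsplit : fderiv ℝ (gradient E) z + fderiv ℝ (gradient Eδ) z - A
          = (fderiv ℝ (gradient E) z - fderiv ℝ (gradient E) xstar)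
            + fderiv ℝ (gradient Eδ) z := by rw [hA]; abel
      rw [hsplit]
      have hzr : ‖z - xstar‖ ≤ r := by
        rw [← dist_eq_norm]; exact Metric.mem_closedBall.mp hz
      calc ‖(fderiv ℝ (gradient E) z - fderiv ℝ (gradient E) xstar)
            + fderiv ℝ (gradient Eδ) z‖
          ≤ ‖fderiv ℝ (gradient E) z - fderiv ℝ (gradient E) xstar‖
            + ‖fderiv ℝ (gradient Eδ) z‖ := norm_add_le _ _
        _ ≤ M * ‖z - xstar‖ + ε := add_le_add
            (hLip z hzball xstar (Metric.mem_ball_self hδ)) (hδHess z hzball)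
        _ ≤ M * r + ε := by nlinarith
    have key : ‖g x - g y‖ ≤ (M * r + ε) * ‖x - y‖ :=
      (convex_closedBall xstar r).norm_image_sub_le_of_norm_fderiv_le
        (fun z _ => hgdiff z) hgf hy hx
    have hexp : gradient (fun x => E x + Eδ x) x - gradient (fun x => E x + Eδ x) y
        - A (x - y) = g x - g y := by
      rw [hg]; simp only [map_sub]; abel
    rw [hexp]
    calc ‖g x - g y‖ ≤ (M * r + ε) * ‖x - y‖ := key
      _ = ((M * r + ε).toNNReal : ℝ) * ‖x - y‖ := by
          rw [Real.coe_toNNReal _ (by positivity)]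
  -- surjectivity
  have hsurj := happrox.surjOn_closedBall_of_nonlinearRightInverse
    Aeq.toNonlinearRightInverse hr0 Set.Subset.rfl
  have hnnn : (Aeq.toNonlinearRightInverse.nnnorm : ℝ)
      = ‖(Aeq.symm : EuclideanSpace ℝ (Fin d) →L[ℝ] EuclideanSpace ℝ (Fin d))‖ := by
    rw [show Aeq.toNonlinearRightInverse.nnnorm
      = ‖(Aeq.symm : EuclideanSpace ℝ (Fin d) →L[ℝ] EuclideanSpace ℝ (Fin d))‖₊ from rfl,
      coe_nnnorm]
  have hFx : ‖gradient (fun x => E x + Eδ x) xstar‖ ≤ ε := by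
    rw [hsum xstar, hcrit, zero_add]
    exact hδGrad xstar (Metric.mem_ball_self hδ)
  have hmem : (0 : EuclideanSpace ℝ (Fin d)) ∈ Metric.closedBall
      (gradient (fun x => E x + Eδ x) xstar)
      (((Aeq.toNonlinearRightInverse.nnnorm : ℝ)⁻¹ - ((M * r + ε).toNNReal : ℝ)) * r) := by
    rw [Metric.mem_closedBall, dist_zero_left]
    have hcv : ((M * r + ε).toNNReal : ℝ) = M * r + ε := Real.coe_toNNReal _ (by positivity)
    have hti : μ ≤ (Aeq.toNonlinearRightInverse.nnnorm : ℝ)⁻¹ := by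
      rw [hnnn]; exact hμs
    have h5 : 3 * μ / 8 ≤ (Aeq.toNonlinearRightInverse.nnnorm : ℝ)⁻¹
        - ((M * r + ε).toNNReal : ℝ) := by
      rw [hcv]; linarith
    have h6 : (3 * μ / 8) * r ≤ ((Aeq.toNonlinearRightInverse.nnnorm : ℝ)⁻¹
        - ((M * r + ε).toNNReal : ℝ)) * r := mul_le_mul_of_nonneg_right h5 hr0
    have h7 : (3 * μ / 8) * r = 3 * ε / 2 := by
      rw [hrdef]; field_simp; ring
    linarith
  obtain ⟨xnn, hxnn_mem, hxnn_eq⟩ := hsurj hmem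
  refine ⟨xnn, hxnn_eq, ?_⟩
  rw [← dist_eq_norm]
  exact Metric.mem_closedBall.mp hxnn_mem
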